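/- Let p ≥ 3 be a prime and n ≥ 1. The set G = {p^n - p^{n-1}, p^n - p^{n-2}, ..., p^n - 1, p^n} is the unique minimal generating set of the numerical semigroup Γ_{p,n}: no element of G is a sum of two nonzero elements of Γ_{p,n}, and G generates Γ_{p,n}. -/

import Mathlib

/-- The set `G = {p^n - p^{n-1}, …, p^n - 1, p^n}`. -/
def gammaGen (p n : ℕ) : Set ℕ :=
  {m | m = p ^ n ∨ ∃ j < n, m = p ^ n - p ^ j}

/-- The numerical semigroup `Γ_{p,n} = ⟨p^n, p^n - p^{n-1}, …, p^n - 1⟩`. -/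
def Gamma (p n : ℕ) : AddSubmonoid ℕ := AddSubmonoid.closure (gammaGen p n)

/-- For `p ≥ 3` and `n ≥ 1`, the set `G = {p^n - p^{n-1}, …, p^n - 1, p^n}`
is the minimal generating set of `Γ_{p,n}`: it generates `Γ_{p,n}`, and no
element of `G` is a sum of two nonzero elements of `Γ_{p,n}`. -/
theorem Gamma_minimal_generating (p n : ℕ) (hp : p.Prime) (hp3 : 3 ≤ p)
    (hn : 1 ≤ n) :
    AddSubmonoid.closure (gammaGen p n) = Gamma p n ∧
    ∀ g ∈ gammaGen p n,
      ¬ ∃ a b : ℕ, a ∈ Gamma p n ∧ b ∈ Gamma p n ∧ a ≠ 0 ∧ b ≠ 0 ∧ a + b = g := by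
  have hp2 : 2 ≤ p := le_trans (by norm_num) hp3
  have hp0 : 0 < p := by omega
  -- every nonzero element of Γ is ≥ p^n - p^(n-1)
  have key : ∀ x ∈ Gamma p n, x = 0 ∨ p ^ n - p ^ (n - 1) ≤ x := by
    intro x hx
    refine AddSubmonoid.closure_induction ?_ (Or.inl rfl) ?_ hx
    · rintro m (rfl | ⟨j, hj, rfl⟩)
      · right
        exact Nat.sub_le _ _
      · right
        exact Nat.sub_le_sub_left (Nat.pow_le_pow_right hp0 (by omega)) _
    · rintro a b _ _ (rfl | ha) (rfl | hb)
      · exact Or.inl rfl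
      · exact Or.inr (by omega)
      · exact Or.inr (by omega)
      · exact Or.inr (by omega)
  refine ⟨rfl, ?_⟩
  rintro g hg ⟨a, b, ha, hb, ha0, hb0, hab⟩
  have hga : p ^ n - p ^ (n - 1) ≤ a := (key a ha).resolve_left ha0
  have hgb : p ^ n - p ^ (n - 1) ≤ b := (key b hb).resolve_left hb0
  have hgle : g ≤ p ^ n := by
    rcases hg with rfl | ⟨j, hj, rfl⟩
    · exact le_refl _
    · exact Nat.sub_le _ _
  -- p^n ≥ 3 * p^(n-1), so 2*(p^n - p^(n-1)) > p^n
  have hpow : 3 * p ^ (n - 1) ≤ p ^ n := by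
    have : p ^ n = p * p ^ (n - 1) := by
      rw [← pow_succ']
      congr 1
      omega
    rw [this]
    exact Nat.mul_le_mul_right _ hp3
  have hpos : 0 < p ^ (n - 1) := Nat.pow_pos hp0
  omega
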